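/- arXiv:1504.04696 — 2 statements merged into one kernel-verified Lean document; each statement's English description precedes it below -/
import Mathlib

section
/- If ζ ~ χ²_n, then for every z > 0, P(ζ − n ≥ 2√(zn) + 2z) ≤ e^{−z} and P(n − ζ ≥ 2√(zn)) ≤ e^{−z}. -/
open MeasureTheory ProbabilityTheory Real
open scoped ENNReal NNReal

/-- The distribution of a vector of `n` iid standard Gaussians. -/
noncomputable def stdGaussianPi (n : ℕ) : Measure (Fin n → ℝ) :=
  Measure.pi fun _ => gaussianReal 0 1

/-- The chi-squared distribution with `n` degrees of freedom. -/
noncomputable def chiSquared (n : ℕ) : Measure ℝ :=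
  (stdGaussianPi n).map (fun x => ∑ i, (x i) ^ 2)


lemma aux_neg_log_le {u : ℝ} (hu : 0 < u) (hu1 : u ≤ 1) :
    -Real.log u ≤ (u⁻¹ - u) / 2 := by
  have h1 : (1:ℝ) ≤ u⁻¹ := (one_le_inv_iff₀).2 ⟨hu, hu1⟩
  have h2 : 0 ≤ Real.log u⁻¹ := Real.log_nonneg h1
  have h3 := Real.self_le_sinh_iff.mpr h2
  rw [Real.sinh_log (by positivity)] at h3
  rw [Real.log_inv] at h3 h2
  simpa [inv_inv] using h3

lemma aux_log_one_add {x : ℝ} (hx : 0 ≤ x) :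
    x - x ^ 2 / 2 ≤ Real.log (1 + x) := by
  set f : ℝ → ℝ := fun s => Real.log (1 + s) - s + s ^ 2 / 2 with hf
  have key : ∀ y : ℝ, 0 ≤ y → HasDerivAt f ((1 + y)⁻¹ - 1 + y) y := by
    intro y hy
    have h1 : HasDerivAt (fun s : ℝ => 1 + s) 1 y := by
      simpa using (hasDerivAt_id y).const_add 1
    have h2 : HasDerivAt (fun s : ℝ => Real.log (1 + s)) ((1 + y)⁻¹ * 1) y :=
      (Real.hasDerivAt_log (by linarith)).comp y h1
    have h3 : HasDerivAt (fun s : ℝ => s ^ 2 / 2) y y := by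
      simpa using (hasDerivAt_pow 2 y).div_const 2
    have h4 := (h2.sub (hasDerivAt_id y)).add h3
    rw [mul_one] at h4
    exact h4
  have hmono : MonotoneOn f (Set.Ici 0) := by
    apply monotoneOn_of_deriv_nonneg (convex_Ici 0)
    · apply ContinuousOn.add (ContinuousOn.sub ?_ continuousOn_id)
      · exact (continuous_pow 2).continuousOn.div_const 2
      · apply ContinuousOn.log (by fun_prop)
        intro y hy
        simp only [Set.mem_Ici] at hy
        intro h; linarith
    · intro y hy
      rw [interior_Ici] at hy
      exact ((key y (le_of_lt hy)).differentiableAt).differentiableWithinAt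
    · intro y hy
      rw [interior_Ici] at hy
      rw [(key y (le_of_lt hy)).deriv]
      have h1 : (0:ℝ) < 1 + y := by simp only [Set.mem_Ioi] at hy; linarith
      have : (1 + y)⁻¹ - 1 + y = y ^ 2 / (1 + y) := by field_simp; ring
      rw [this]; positivity
  have h0 : f 0 ≤ f x := hmono (by simp) (by simpa using hx) hx
  simp only [hf] at h0
  norm_num at h0
  linarith


lemma gauss_pdf_mul {c : ℝ} (hc : c < 1/2) :
    Integrable (fun x => gaussianPDFReal 0 1 x * Real.exp (c * x ^ 2)) volume ∧
    ∫ x, gaussianPDFReal 0 1 x * Real.exp (c * x ^ 2) = (Real.sqrt (1 - 2*c))⁻¹ := by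
  have hb : 0 < 1/2 - c := by linarith
  have heq : (fun x : ℝ => gaussianPDFReal 0 1 x * Real.exp (c * x ^ 2))
      = fun x => (Real.sqrt (2*π))⁻¹ * Real.exp (-(1/2 - c) * x ^ 2) := by
    funext x
    rw [gaussianPDFReal]
    simp only [NNReal.coe_one, mul_one, sub_zero]
    rw [mul_assoc, ← Real.exp_add]
    ring_nf
  constructor
  · rw [heq]
    exact (integrable_exp_neg_mul_sq hb).const_mul _
  · rw [heq, integral_const_mul, integral_gaussian]
    rw [show π / (1/2 - c) = (2*π) / (1 - 2*c) by field_simp]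
    rw [Real.sqrt_div (by positivity : (0:ℝ) ≤ 2*π)]
    have h1 : Real.sqrt (2*π) ≠ 0 := by positivity
    field_simp

lemma gauss_exp_sq {c : ℝ} (hc : c < 1/2) :
    Integrable (fun x => Real.exp (c * x ^ 2)) (gaussianReal 0 1) ∧
    ∫ x, Real.exp (c * x ^ 2) ∂(gaussianReal 0 1) = (Real.sqrt (1 - 2*c))⁻¹ := by
  obtain ⟨hint, hval⟩ := gauss_pdf_mul hc
  have hmeas : Measurable fun x => (gaussianPDFReal 0 1 x).toNNReal :=
    (measurable_gaussianPDFReal 0 1).real_toNNReal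
  have hμ : gaussianReal 0 1
      = volume.withDensity fun x => ((gaussianPDFReal 0 1 x).toNNReal : ℝ≥0∞) := by
    rw [gaussianReal_of_var_ne_zero 0 one_ne_zero]; rfl
  have hsmul : (fun x => ((gaussianPDFReal 0 1 x).toNNReal : ℝ) • Real.exp (c * x ^ 2))
      = fun x => gaussianPDFReal 0 1 x * Real.exp (c * x ^ 2) := by
    funext x
    rw [smul_eq_mul, Real.coe_toNNReal _ (gaussianPDFReal_nonneg 0 1 x)]
  constructor
  · rw [hμ, integrable_withDensity_iff_integrable_coe_smul hmeas, hsmul]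
    exact hint
  · rw [hμ, integral_withDensity_eq_integral_smul hmeas]
    rw [show (fun x => ((gaussianPDFReal 0 1 x).toNNReal : ℝ≥0) • Real.exp (c * x ^ 2))
        = fun x => gaussianPDFReal 0 1 x * Real.exp (c * x ^ 2) from hsmul]
    exact hval

lemma stdGaussianPi_prod (n : ℕ) (f : ℝ → ℝ) (hf : Integrable f (gaussianReal 0 1)) :
    Integrable (fun x : Fin n → ℝ => ∏ i, f (x i)) (stdGaussianPi n) ∧
    ∫ x, ∏ i, f (x i) ∂(stdGaussianPi n) = (∫ x, f x ∂(gaussianReal 0 1)) ^ n := by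
  letI : MeasureSpace ℝ := ⟨gaussianReal 0 1⟩
  haveI : SigmaFinite (volume : Measure ℝ) := inferInstanceAs (SigmaFinite (gaussianReal 0 1))
  constructor
  · exact Integrable.fintype_prod (fun _ => hf)
  · simpa [stdGaussianPi] using MeasureTheory.integral_fintype_prod_eq_pow (ι := Fin n) (μ := gaussianReal 0 1) f


lemma chiSq_mgf (n : ℕ) {c : ℝ} (hc : c < 1/2) :
    Integrable (fun x : Fin n → ℝ => Real.exp (c * ∑ i, (x i) ^ 2)) (stdGaussianPi n) ∧
    ∫ x, Real.exp (c * ∑ i, (x i) ^ 2) ∂(stdGaussianPi n)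
      = ((Real.sqrt (1 - 2*c))⁻¹) ^ n := by
  obtain ⟨hi, hv⟩ := gauss_exp_sq hc
  have heq : (fun x : Fin n → ℝ => Real.exp (c * ∑ i, (x i) ^ 2))
      = fun x => ∏ i, Real.exp (c * (x i) ^ 2) := by
    funext x; rw [Finset.mul_sum, Real.exp_sum]
  obtain ⟨hpi, hpv⟩ := stdGaussianPi_prod n (fun y => Real.exp (c * y ^ 2)) hi
  rw [heq]
  exact ⟨hpi, by rw [hpv, hv]⟩

-- the key real bound, upper tail
lemma chernoff_bound_aux (n : ℕ) {t ε z : ℝ} (ht : t < 1/2) (hu1 : 1 - 2*t ≤ 1)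
    (hu0 : 0 < 1 - 2*t)
    (hexp : -t * ε + n * ((1-2*t)⁻¹ - (1-2*t)) / 4 ≤ -z) :
    Real.exp (-t * ε) * ((Real.sqrt (1 - 2*t))⁻¹) ^ n ≤ Real.exp (-z) := by
  set u := 1 - 2*t with hu
  have hsq : Real.sqrt u = Real.exp (Real.log u / 2) := by
    rw [← Real.log_sqrt hu0.le, Real.exp_log (Real.sqrt_pos.2 hu0)]
  have h1 : ((Real.sqrt u)⁻¹) ^ n = Real.exp ((n : ℝ) * (-(Real.log u / 2))) := by
    rw [hsq, ← Real.exp_neg, ← Real.exp_nat_mul]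
  rw [h1, ← Real.exp_add, Real.exp_le_exp]
  have hlog : -Real.log u ≤ (u⁻¹ - u) / 2 := aux_neg_log_le hu0 hu1
  have : (n : ℝ) * (-(Real.log u / 2)) ≤ (n : ℝ) * ((u⁻¹ - u) / 4) := by
    have hn0 : (0:ℝ) ≤ n := Nat.cast_nonneg n
    nlinarith
  nlinarith [hexp]

lemma chernoff_bound_aux2 (n : ℕ) {t ε z : ℝ} (ht : t ≤ 0)
    (hexp : -t * ε + n * (-((-2*t) - (-2*t)^2/2) / 2) ≤ -z) :
    Real.exp (-t * ε) * ((Real.sqrt (1 - 2*t))⁻¹) ^ n ≤ Real.exp (-z) := by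
  have hu0 : (0:ℝ) < 1 - 2*t := by linarith
  set u := 1 - 2*t with hu
  have hsq : Real.sqrt u = Real.exp (Real.log u / 2) := by
    rw [← Real.log_sqrt hu0.le, Real.exp_log (Real.sqrt_pos.2 hu0)]
  have h1 : ((Real.sqrt u)⁻¹) ^ n = Real.exp ((n : ℝ) * (-(Real.log u / 2))) := by
    rw [hsq, ← Real.exp_neg, ← Real.exp_nat_mul]
  rw [h1, ← Real.exp_add, Real.exp_le_exp]
  have hlog : (-2*t) - (-2*t)^2/2 ≤ Real.log u := by
    have := aux_log_one_add (x := -2*t) (by linarith)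
    calc (-2*t) - (-2*t)^2/2 ≤ Real.log (1 + (-2*t)) := this
    _ = Real.log u := by rw [hu]; ring_nf
  have hn0 : (0:ℝ) ≤ n := Nat.cast_nonneg n
  nlinarith


/-- Laurent–Massart tail bounds for the chi-squared distribution. -/
theorem chiSq_laurent_massart_tails (n : ℕ) (hn : 0 < n) (z : ℝ) (hz : 0 < z) :
    (chiSquared n) {x | x - n ≥ 2 * Real.sqrt (z * n) + 2 * z}
        ≤ ENNReal.ofReal (Real.exp (-z)) ∧
    (chiSquared n) {x | (n : ℝ) - x ≥ 2 * Real.sqrt (z * n)}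
        ≤ ENNReal.ofReal (Real.exp (-z)) := by
  set X : (Fin n → ℝ) → ℝ := fun x => ∑ i, (x i) ^ 2 with hX
  have hXm : Measurable X := by
    apply Finset.measurable_sum
    intro i _
    exact (measurable_pi_apply i).pow_const 2
  haveI : IsProbabilityMeasure (stdGaussianPi n) := by
    unfold stdGaussianPi; infer_instance
  set a := Real.sqrt n with hadef
  set b := Real.sqrt z with hbdef
  have ha : 0 < a := Real.sqrt_pos.2 (by exact_mod_cast hn)
  have hb : 0 < b := Real.sqrt_pos.2 hz
  have ha2 : a ^ 2 = n := Real.sq_sqrt (Nat.cast_nonneg n)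
  have hb2 : b ^ 2 = z := Real.sq_sqrt hz.le
  have hzn : Real.sqrt (z * n) = b * a := Real.sqrt_mul hz.le n
  constructor
  · -- upper tail
    set t := b / (a + 2*b) with htdef
    have ht0 : 0 ≤ t := by positivity
    have ht : t < 1/2 := by
      rw [div_lt_iff₀ (by linarith)]; linarith
    obtain ⟨hi, hv⟩ := chiSq_mgf n ht
    set ε := 2 * Real.sqrt (z * n) + 2 * z + n with hεdef
    have hset : {x : ℝ | x - n ≥ 2 * Real.sqrt (z * n) + 2 * z} = Set.Ici ε := by
      ext x
      simp only [Set.mem_setOf_eq, Set.mem_Ici, ge_iff_le, hεdef]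
      constructor <;> intro h <;> linarith
    have hmap : chiSquared n {x | x - n ≥ 2 * Real.sqrt (z * n) + 2 * z}
        = stdGaussianPi n {ω | ε ≤ X ω} := by
      rw [chiSquared, hset, Measure.map_apply hXm measurableSet_Ici]
      rfl
    have hch := measure_ge_le_exp_mul_mgf (μ := stdGaussianPi n) (X := X) ε ht0 hi
    rw [mgf] at hch
    rw [hX] at hch
    rw [hv] at hch
    have hfinal : Real.exp (-t * ε) * ((Real.sqrt (1 - 2*t))⁻¹) ^ n ≤ Real.exp (-z) := by
      apply chernoff_bound_aux n ht
      · rw [htdef]; nlinarith [div_nonneg hb.le (by linarith : (0:ℝ) ≤ a + 2*b)]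
      · rw [htdef]
        have : 1 - 2 * (b / (a + 2*b)) = a / (a + 2*b) := by
          field_simp; ring
        rw [this]; positivity
      · have hab : a + 2*b ≠ 0 := by positivity
        have hεval : ε = 2 * (b*a) + 2 * b^2 + a^2 := by
          rw [hεdef, hzn, hb2, ha2]
        have hu : 1 - 2*t = a / (a + 2*b) := by
          rw [htdef]; field_simp; ring
        rw [hεval, hu, htdef, ← ha2]
        have key : -(b / (a + 2*b)) * (2 * (b*a) + 2*b^2 + a^2)
            + a^2 * ((a / (a + 2*b))⁻¹ - a / (a + 2*b)) / 4 = -(b^2) := by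
          rw [inv_div]
          field_simp
          ring
        rw [key, hb2]
    rw [hmap]
    calc stdGaussianPi n {ω | ε ≤ X ω}
        = ENNReal.ofReal ((stdGaussianPi n {ω | ε ≤ X ω}).toReal) :=
          (ENNReal.ofReal_toReal (measure_ne_top _ _)).symm
      _ ≤ ENNReal.ofReal (Real.exp (-z)) :=
          ENNReal.ofReal_le_ofReal (hch.trans hfinal)
  · -- lower tail
    set t := -(b / a) with htdef
    have ht0 : t ≤ 0 := neg_nonpos.mpr (by positivity)
    have ht : t < 1/2 := lt_of_le_of_lt ht0 (by norm_num)
    obtain ⟨hi, hv⟩ := chiSq_mgf n ht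
    set ε := (n:ℝ) - 2 * Real.sqrt (z * n) with hεdef
    have hset : {x : ℝ | (n:ℝ) - x ≥ 2 * Real.sqrt (z * n)} = Set.Iic ε := by
      ext x
      simp only [Set.mem_setOf_eq, Set.mem_Iic, ge_iff_le, hεdef]
      constructor <;> intro h <;> linarith
    have hmap : chiSquared n {x | (n:ℝ) - x ≥ 2 * Real.sqrt (z * n)}
        = stdGaussianPi n {ω | X ω ≤ ε} := by
      rw [chiSquared, hset, Measure.map_apply hXm measurableSet_Iic]
      rfl
    have hch := measure_le_le_exp_mul_mgf (μ := stdGaussianPi n) (X := X) ε ht0 hi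
    rw [mgf] at hch
    rw [hX] at hch
    rw [hv] at hch
    have hfinal : Real.exp (-t * ε) * ((Real.sqrt (1 - 2*t))⁻¹) ^ n ≤ Real.exp (-z) := by
      apply chernoff_bound_aux2 n ht0
      have ha0 : a ≠ 0 := ha.ne'
      have hεval : ε = a^2 - 2 * (b*a) := by
        rw [hεdef, hzn, ha2]
      rw [hεval, htdef, ← ha2]
      have key : -(-(b/a)) * (a^2 - 2*(b*a))
          + a^2 * (-((-2*(-(b/a))) - (-2*(-(b/a)))^2/2)/2) = -(b^2) := by
        field_simp
        ring
      rw [key, hb2]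
    rw [hmap]
    calc stdGaussianPi n {ω | X ω ≤ ε}
        = ENNReal.ofReal ((stdGaussianPi n {ω | X ω ≤ ε}).toReal) :=
          (ENNReal.ofReal_toReal (measure_ne_top _ _)).symm
      _ ≤ ENNReal.ofReal (Real.exp (-z)) :=
          ENNReal.ofReal_le_ofReal (hch.trans hfinal)
end

section
/- Let Ω* = B* D^{-1}_{φ*} be a symmetric positive definite matrix with unit-diagonal B* and φ* ∈ (0,∞)^p, and suppose B*_{j1} ≠ 0 for every j ∈ [p]. Then a vector φ ∈ (0,∞)^p is such that B* D^{-1}_{φ} is symmetric positive semidefinite if and only if φ_1 > 0 and φ_j = (B*_{1j}/B*_{j1}) φ_1 for every j ∈ [p]; in that case B* D^{-1}_{φ} = (φ*_1/φ_1) Ω*. -/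
open Matrix

lemma diag_inv_aux {p : ℕ} (v : Fin p → ℝ) (hv : ∀ j, v j ≠ 0) :
    (Matrix.diagonal v)⁻¹ = Matrix.diagonal (fun j => (v j)⁻¹) := by
  apply Matrix.inv_eq_right_inv
  rw [Matrix.diagonal_mul_diagonal]
  convert Matrix.diagonal_one with j
  exact mul_inv_cancel₀ (hv j)

lemma psd_smul_aux {p : ℕ} {M : Matrix (Fin p) (Fin p) ℝ} (hM : M.PosSemidef)
    {c : ℝ} (hc : 0 ≤ c) : (c • M).PosSemidef := by
  constructor
  · have : (c • M)ᴴ = c • Mᴴ := by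
      simp [Matrix.conjTranspose_smul]
    rw [Matrix.IsHermitian, this, hM.1]
  · exact (hM.smul hc).2

/-- If `Ω = B D_{φ*}⁻¹` is symmetric positive definite with unit-diagonal `B` and all the
entries of the first column of `B` are nonzero, then for a positive vector `φ`, the matrix
`B D_φ⁻¹` is symmetric positive semidefinite iff `φ_1 > 0` and `φ_j = (B_{1j}/B_{j1}) φ_1`
for all `j`; in that case `B D_φ⁻¹ = (φ*_1 / φ_1) Ω`. -/
theorem posSemidef_iff_proportional (p : ℕ) [NeZero p]
    (B : Matrix (Fin p) (Fin p) ℝ) (hBdiag : ∀ j, B j j = 1)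
    (φs : Fin p → ℝ) (hφs : ∀ j, 0 < φs j)
    (hPD : (B * (Matrix.diagonal φs)⁻¹).PosDef)
    (hB1 : ∀ j, B j 0 ≠ 0)
    (φ : Fin p → ℝ) (hφ : ∀ j, 0 < φ j) :
    ((B * (Matrix.diagonal φ)⁻¹).PosSemidef ↔
        (0 < φ 0 ∧ ∀ j, φ j = (B 0 j / B j 0) * φ 0)) ∧
      ((B * (Matrix.diagonal φ)⁻¹).PosSemidef →
        B * (Matrix.diagonal φ)⁻¹ = (φs 0 / φ 0) • (B * (Matrix.diagonal φs)⁻¹)) := by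
  have hφne : ∀ j, φ j ≠ 0 := fun j => (hφ j).ne'
  have hφsne : ∀ j, φs j ≠ 0 := fun j => (hφs j).ne'
  have hinv : (Matrix.diagonal φ)⁻¹ = Matrix.diagonal (fun j => (φ j)⁻¹) :=
    diag_inv_aux φ hφne
  have hinvs : (Matrix.diagonal φs)⁻¹ = Matrix.diagonal (fun j => (φs j)⁻¹) :=
    diag_inv_aux φs hφsne
  -- symmetry of Ω*
  have hsymS : ∀ j, φs j = (B 0 j / B j 0) * φs 0 := by
    intro j
    have h := hPD.isHermitian.apply 0 j
    rw [hinvs] at h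
    simp only [Matrix.mul_diagonal, star_trivial] at h
    field_simp at h
    rw [div_eq_div_iff (hφsne 0) (hφsne j)] at h
    rw [div_mul_eq_mul_div, eq_div_iff (hB1 j)]
    linarith [h]
  -- the condition implies the matrix identity
  have key : (∀ j, φ j = (B 0 j / B j 0) * φ 0) →
      B * (Matrix.diagonal φ)⁻¹ = (φs 0 / φ 0) • (B * (Matrix.diagonal φs)⁻¹) := by
    intro h
    rw [hinv, hinvs]
    ext i j
    simp only [Matrix.mul_diagonal, Matrix.smul_apply, smul_eq_mul]
    have h1 := h j
    have h2 := hsymS j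
    -- φ j = (B 0 j / B j 0) φ 0, φs j = (B 0 j / B j 0) φs 0
    have hB0 : B 0 j ≠ 0 := by
      intro hz
      rw [hz] at h1
      simp at h1
      exact hφne j h1
    rw [h1, h2]
    field_simp [hφne 0, hφsne 0, hB1 j, hB0]
  constructor
  · constructor
    · intro hPSD
      refine ⟨hφ 0, fun j => ?_⟩
      have h := hPSD.isHermitian.apply 0 j
      rw [hinv] at h
      simp only [Matrix.mul_diagonal, star_trivial] at h
      field_simp at h
      rw [div_eq_div_iff (hφne 0) (hφne j)] at h
      rw [div_mul_eq_mul_div, eq_div_iff (hB1 j)]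
      linarith [h]
    · rintro ⟨-, h⟩
      rw [key h]
      exact psd_smul_aux hPD.posSemidef (le_of_lt (div_pos (hφs 0) (hφ 0)))
  · intro hPSD
    apply key
    intro j
    have h := hPSD.isHermitian.apply 0 j
    rw [hinv] at h
    simp only [Matrix.mul_diagonal, star_trivial] at h
    field_simp at h
    rw [div_eq_div_iff (hφne 0) (hφne j)] at h
    rw [div_mul_eq_mul_div, eq_div_iff (hB1 j)]
    linarith [h]
end
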